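/- For ρ > 0, n ∈ ℕ₀ and x ∈ (-1,1), the fractional integral of the Legendre polynomial P_n satisfies I₋^ρ P_n(x) = [n!/Γ(n+ρ+1)] (1+x)^ρ P_n^{(-ρ,ρ)}(x). -/

import Mathlib

open Real Filter Set

/-- Left-sided Riemann–Liouville fractional integral of order `ρ` with base point `a`. -/
noncomputable def fracInt (a ρ : ℝ) (u : ℝ → ℝ) (x : ℝ) : ℝ :=
  (1 / Real.Gamma ρ) * ∫ y in a..x, u y * (x - y) ^ (ρ - 1)

/-- Left-sided Caputo fractional derivative of order `μ ∈ (k-1,k)` with base point `a`. -/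
noncomputable def caputoD (k : ℕ) (μ a : ℝ) (u : ℝ → ℝ) : ℝ → ℝ :=
  fracInt a ((k : ℝ) - μ) (iteratedDeriv k u)

/-- Left-sided Riemann–Liouville fractional derivative of order `μ ∈ (k-1,k)` with base point `a`. -/
noncomputable def rlD (k : ℕ) (μ a : ℝ) (u : ℝ → ℝ) : ℝ → ℝ :=
  iteratedDeriv k (fracInt a ((k : ℝ) - μ) u)

/-- Jacobi polynomial `P_n^{(α,β)}` for general real parameters, via the terminating
hypergeometric representation. -/
noncomputable def jacobiP (n : ℕ) (α β : ℝ) (x : ℝ) : ℝ :=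
  (1 / (n.factorial : ℝ)) * ∑ m ∈ Finset.range (n + 1),
    (n.choose m : ℝ) * (∏ i ∈ Finset.range (n - m), (α + m + 1 + i)) *
    (∏ i ∈ Finset.range m, (α + β + n + 1 + i)) * ((x - 1) / 2) ^ m

/-- Legendre polynomial. -/
noncomputable def legendreP (n : ℕ) (x : ℝ) : ℝ := jacobiP n 0 0 x

set_option maxRecDepth 4000

lemma aux_descP_prod (r : ℕ) (z : ℝ) :
    (descPochhammer ℝ r).eval z = ∏ i ∈ Finset.range r, (z - i) := by
  induction r with
  | zero => simp
  | succ r ih => rw [descPochhammer_succ_eval, ih, Finset.prod_range_succ]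

lemma aux_smeval_descP (r : ℕ) (z : ℝ) :
    (descPochhammer ℤ r).smeval z = (descPochhammer ℝ r).eval z := by
  rw [← Polynomial.aeval_eq_smeval, Polynomial.aeval_def, ← Polynomial.eval_map,
    descPochhammer_map]

lemma aux_vdm (r : ℕ) (a b : ℝ) :
    (descPochhammer ℝ r).eval (a + b) =
      ∑ j ∈ Finset.range (r + 1), (r.choose j : ℝ) *
        ((descPochhammer ℝ j).eval a * (descPochhammer ℝ (r - j)).eval b) := by
  have h := Ring.descPochhammer_smeval_add (R := ℝ) (r := a) (s := b) r (Commute.all a b)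
  rw [Finset.Nat.sum_antidiagonal_eq_sum_range_succ_mk] at h
  simpa [aux_smeval_descP] using h

lemma aux_CL (n k : ℕ) (hk : k ≤ n) (t : ℝ) :
    ∑ m ∈ Finset.Ico k (n+1), (-1:ℝ)^(m-k) * (n.choose m) * (m.choose k) *
        (∏ i ∈ Finset.range m, ((n:ℝ)+1+i)) * (∏ i ∈ Finset.range (n-m), ((m:ℝ)+1-t+i))
    = (-1:ℝ)^(n-k) * (n.choose k) * (∏ i ∈ Finset.range k, ((n:ℝ)+1+i)) *
        (∏ i ∈ Finset.range (n-k), ((k:ℝ)+1+t+i)) := by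
  set r := n - k with hr
  have hn1 : n + 1 - k = r + 1 := by omega
  rw [Finset.sum_Ico_eq_sum_range, hn1]
  have key : ∀ j ∈ Finset.range (r+1),
      (-1:ℝ)^(k+j-k) * (n.choose (k+j)) * ((k+j).choose k) *
        (∏ i ∈ Finset.range (k+j), ((n:ℝ)+1+i)) *
        (∏ i ∈ Finset.range (n-(k+j)), (((k+j : ℕ):ℝ)+1-t+i))
      = (n.choose k : ℝ) * (∏ i ∈ Finset.range k, ((n:ℝ)+1+i)) *
        ((r.choose j : ℝ) * ((descPochhammer ℝ j).eval (-((n:ℝ)+k+1)) *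
          (descPochhammer ℝ (r-j)).eval ((n:ℝ)-t))) := by
    intro j hj
    have hj' : j ≤ r := by simpa [Nat.lt_succ_iff] using hj
    have e1 : k + j - k = j := by omega
    have e2 : n - (k+j) = r - j := by omega
    have e3 : (n.choose (k+j) : ℝ) * ((k+j).choose k) = (n.choose k : ℝ) * (r.choose j) := by
      have := Nat.choose_mul (n := n) (Nat.le_add_right k j)
      rw [Nat.add_sub_cancel_left] at this
      rw [← hr] at this
      exact_mod_cast congrArg (Nat.cast : ℕ → ℝ) this
    have hQ : (descPochhammer ℝ j).eval (-((n:ℝ)+k+1))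
        = (-1:ℝ)^j * ∏ i ∈ Finset.range j, ((n:ℝ)+1+((k+i : ℕ):ℝ)) := by
      rw [aux_descP_prod]
      rw [show ((-1:ℝ)^j * ∏ i ∈ Finset.range j, ((n:ℝ)+1+((k+i : ℕ):ℝ)))
          = ∏ i ∈ Finset.range j, ((-1) * ((n:ℝ)+1+((k+i : ℕ):ℝ))) by
        rw [Finset.prod_mul_distrib, Finset.prod_const, Finset.card_range]]
      refine Finset.prod_congr rfl fun i _ => ?_
      push_cast
      ring
    have hR : (descPochhammer ℝ (r-j)).eval ((n:ℝ)-t)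
        = ∏ i ∈ Finset.range (r-j), (((k+j : ℕ):ℝ)+1-t+i) := by
      rw [aux_descP_prod,
        ← Finset.prod_range_reflect (fun i => (((k+j : ℕ):ℝ)+1-t+i)) (r-j)]
      refine Finset.prod_congr rfl fun i hi => ?_
      have hi' : i < r - j := Finset.mem_range.mp hi
      have hc : ((r - j - 1 - i : ℕ) : ℝ) = (r:ℝ) - j - 1 - i := by
        have h5 : r - j - 1 - i = r - (j + 1 + i) := by omega
        rw [h5, Nat.cast_sub (by omega)]
        push_cast
        ring
      have hkr : (k:ℝ) + r = n := by
        exact_mod_cast congrArg (Nat.cast : ℕ → ℝ) (show k + r = n by omega)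
      beta_reduce
      rw [hc]
      push_cast
      linarith
    rw [e1, e2, Finset.prod_range_add, hQ, hR]
    linear_combination ((-1:ℝ)^j * (∏ i ∈ Finset.range k, ((n:ℝ)+1+i)) *
      (∏ i ∈ Finset.range j, ((n:ℝ)+1+((k+i : ℕ):ℝ))) *
      (∏ i ∈ Finset.range (r-j), (((k+j : ℕ):ℝ)+1-t+i))) * e3
  rw [Finset.sum_congr rfl key, ← Finset.mul_sum, ← aux_vdm]
  rw [aux_descP_prod]
  rw [show ∏ i ∈ Finset.range r, (-((n:ℝ)+k+1) + ((n:ℝ)-t) - i)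
      = ∏ i ∈ Finset.range r, ((-1) * ((k:ℝ)+1+t+i)) from
    Finset.prod_congr rfl fun i _ => by push_cast; ring]
  rw [Finset.prod_mul_distrib, Finset.prod_const, Finset.card_range]
  ring

lemma aux_beta (k : ℕ) {ρ : ℝ} (hρ : 0 < ρ) :
    ∫ t in (0:ℝ)..1, t ^ k * (1 - t) ^ (ρ - 1) =
      (k.factorial : ℝ) * Real.Gamma ρ / Real.Gamma (k + 1 + ρ) := by
  have hre1 : 0 < Complex.re ((k : ℂ) + 1) := by simp; positivity
  have hre2 : 0 < Complex.re (ρ : ℂ) := by simpa using hρ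
  have h1 := Complex.Gamma_mul_Gamma_eq_betaIntegral hre1 hre2
  have hre3 : 0 < Complex.re ((k : ℂ) + 1 + ρ) := by
    simp [Complex.add_re]
    positivity
  have hΓ : Complex.Gamma ((k : ℂ) + 1 + ρ) ≠ 0 := Complex.Gamma_ne_zero_of_re_pos hre3
  have h2 : Complex.betaIntegral ((k : ℂ) + 1) ρ
      = ((∫ t in (0:ℝ)..1, t ^ k * (1 - t) ^ (ρ - 1) : ℝ) : ℂ) := by
    rw [Complex.betaIntegral, ← intervalIntegral.integral_ofReal]
    refine intervalIntegral.integral_congr fun t ht => ?_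
    rw [Set.uIcc_of_le (by norm_num : (0:ℝ) ≤ 1)] at ht
    push_cast
    rw [Complex.ofReal_cpow (by linarith [ht.2] : (0:ℝ) ≤ 1 - t)]
    push_cast
    rw [show ((k:ℂ) + 1 - 1) = (k : ℂ) by ring, Complex.cpow_natCast]
  rw [h2] at h1
  have h3 : ((((k.factorial : ℝ)) * Real.Gamma ρ : ℝ) : ℂ)
      = ((Real.Gamma (k + 1 + ρ) : ℝ) : ℂ) * ((∫ t in (0:ℝ)..1, t ^ k * (1 - t) ^ (ρ - 1) : ℝ) : ℂ) := by
    rw [Complex.ofReal_mul]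
    rw [← Real.Gamma_nat_eq_factorial]
    rw [← Complex.Gamma_ofReal, ← Complex.Gamma_ofReal, ← Complex.Gamma_ofReal]
    push_cast
    convert h1 using 3 <;> ring
  have h4 : (k.factorial : ℝ) * Real.Gamma ρ
      = Real.Gamma (k + 1 + ρ) * ∫ t in (0:ℝ)..1, t ^ k * (1 - t) ^ (ρ - 1) := by
    exact_mod_cast h3
  have hΓR : Real.Gamma ((k : ℝ) + 1 + ρ) ≠ 0 := by
    have : (0:ℝ) < (k : ℝ) + 1 + ρ := by positivity
    exact (Real.Gamma_pos_of_pos this).ne'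
  field_simp [h4]
  linarith [h4]

lemma aux_intg (k : ℕ) {ρ x : ℝ} (hρ : 0 < ρ) :
    IntervalIntegrable (fun y => (1 + y) ^ k * (x - y) ^ (ρ - 1))
      MeasureTheory.volume (-1) x := by
  have h0 : IntervalIntegrable (fun u : ℝ => u ^ (ρ - 1)) MeasureTheory.volume 0 (x + 1) :=
    intervalIntegral.intervalIntegrable_rpow' (by linarith)
  have h1 := h0.comp_sub_left x
  have h2 : x - 0 = x := by ring
  have h3 : x - (x + 1) = -1 := by ring
  rw [h2, h3] at h1
  exact h1.symm.continuousOn_mul (by fun_prop)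

lemma aux_J (k : ℕ) {ρ x : ℝ} (hρ : 0 < ρ) (hx : -1 < x) :
    ∫ y in (-1:ℝ)..x, (1 + y) ^ k * (x - y) ^ (ρ - 1) =
      (k.factorial : ℝ) * Real.Gamma ρ / Real.Gamma (k + 1 + ρ) * (1 + x) ^ ((k:ℝ) + ρ) := by
  have hc0 : (0:ℝ) < 1 + x := by linarith
  have hsub := intervalIntegral.smul_integral_comp_mul_sub
      (fun y => (1 + y) ^ k * (x - y) ^ (ρ - 1)) (a := 0) (b := 1) (1 + x) 1
  rw [show (1 + x) * 0 - 1 = (-1 : ℝ) by ring, show (1 + x) * 1 - 1 = x by ring] at hsub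
  rw [← hsub]
  have hcongr : ∀ t ∈ Set.uIcc (0:ℝ) 1,
      (fun t => (1 + ((1+x) * t - 1)) ^ k * (x - ((1+x) * t - 1)) ^ (ρ - 1)) t
        = (1+x) ^ k * (1+x) ^ (ρ-1) * (t ^ k * (1 - t) ^ (ρ - 1)) := by
    intro t ht
    beta_reduce
    rw [Set.uIcc_of_le (by norm_num : (0:ℝ) ≤ 1)] at ht
    have e1 : 1 + ((1+x) * t - 1) = (1+x) * t := by ring
    have e2 : x - ((1+x) * t - 1) = (1+x) * (1 - t) := by ring
    rw [e1, e2, mul_pow, Real.mul_rpow hc0.le (by linarith [ht.2])]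
    ring
  rw [intervalIntegral.integral_congr hcongr, intervalIntegral.integral_const_mul,
    aux_beta k hρ]
  have : (1 + x) ^ ((k:ℝ) + ρ) = (1+x) ^ k * (1+x) ^ (ρ - 1) * (1 + x) := by
    rw [show (k:ℝ) + ρ = (k:ℝ) + (ρ - 1) + 1 by ring, Real.rpow_add hc0, Real.rpow_add hc0,
      Real.rpow_natCast, Real.rpow_one]
  rw [this, smul_eq_mul]
  ring

lemma aux_Gamma_shift {z : ℝ} (hz : 0 < z) (r : ℕ) :
    Real.Gamma (z + r) = Real.Gamma z * ∏ i ∈ Finset.range r, (z + i) := by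
  induction r with
  | zero => simp
  | succ r ih =>
    have h1 : z + ((r : ℝ) + 1) = (z + r) + 1 := by ring
    have h2 : z + (r : ℝ) ≠ 0 := by positivity
    push_cast
    rw [h1, Real.Gamma_add_one h2, ih, Finset.prod_range_succ]
    ring

lemma aux_keyE {ρ : ℝ} (hρ : 0 < ρ) (n k : ℕ) (hk : k ≤ n)
    (hCL : ∀ t : ℝ, ∑ m ∈ Finset.Ico k (n+1), (-1:ℝ)^(m-k) * (n.choose m) * (m.choose k) *
        (∏ i ∈ Finset.range m, ((n:ℝ)+1+i)) * (∏ i ∈ Finset.range (n-m), ((m:ℝ)+1-t+i))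
      = (-1:ℝ)^(n-k) * (n.choose k) * (∏ i ∈ Finset.range k, ((n:ℝ)+1+i)) *
        (∏ i ∈ Finset.range (n-k), ((k:ℝ)+1+t+i))) (S : ℝ) :
    ∑ m ∈ Finset.Ico k (n+1), (1 / Real.Gamma ρ) *
        ((1/(n.factorial:ℝ)) * (n.choose m) * (∏ i ∈ Finset.range (n-m), ((m:ℝ)+1+i)) *
          (∏ i ∈ Finset.range m, ((n:ℝ)+1+i)) * ((2:ℝ)⁻¹)^m * ((-2:ℝ))^(m-k) * (m.choose k) *
          ((k.factorial : ℝ) * Real.Gamma ρ / Real.Gamma ((k:ℝ)+1+ρ) * S))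
    = ∑ m ∈ Finset.Ico k (n+1), ((n.factorial:ℝ) / Real.Gamma ((n:ℝ)+ρ+1)) *
        ((1/(n.factorial:ℝ)) * (n.choose m) * (∏ i ∈ Finset.range (n-m), (-ρ+(m:ℝ)+1+i)) *
          (∏ i ∈ Finset.range m, ((n:ℝ)+1+i)) * ((2:ℝ)⁻¹)^m * ((-2:ℝ))^(m-k) * (m.choose k)) * S := by
  have h2pow : ∀ m, k ≤ m → ((2:ℝ)⁻¹)^m * ((-2:ℝ))^(m-k) = ((2:ℝ)⁻¹)^k * (-1:ℝ)^(m-k) := by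
    intro m hkm
    have e : (2⁻¹:ℝ)^m = (2⁻¹:ℝ)^k * (2⁻¹:ℝ)^(m-k) := by
      rw [← pow_add]; congr 1; omega
    rw [e, mul_assoc, ← mul_pow]; norm_num
  have hL : ∑ m ∈ Finset.Ico k (n+1), (1 / Real.Gamma ρ) *
        ((1/(n.factorial:ℝ)) * (n.choose m) * (∏ i ∈ Finset.range (n-m), ((m:ℝ)+1+i)) *
          (∏ i ∈ Finset.range m, ((n:ℝ)+1+i)) * ((2:ℝ)⁻¹)^m * ((-2:ℝ))^(m-k) * (m.choose k) *
          ((k.factorial : ℝ) * Real.Gamma ρ / Real.Gamma ((k:ℝ)+1+ρ) * S))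
      = ((1 / Real.Gamma ρ) * (1/(n.factorial:ℝ)) * ((2:ℝ)⁻¹)^k *
          ((k.factorial : ℝ) * Real.Gamma ρ / Real.Gamma ((k:ℝ)+1+ρ) * S)) *
        ∑ m ∈ Finset.Ico k (n+1), (-1:ℝ)^(m-k) * (n.choose m) * (m.choose k) *
          (∏ i ∈ Finset.range m, ((n:ℝ)+1+i)) * (∏ i ∈ Finset.range (n-m), ((m:ℝ)+1-(0:ℝ)+i)) := by
    rw [Finset.mul_sum]
    refine Finset.sum_congr rfl fun m hm => ?_
    have hkm : k ≤ m := (Finset.mem_Ico.mp hm).1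
    have hp : ∏ i ∈ Finset.range (n-m), ((m:ℝ)+1-(0:ℝ)+i) = ∏ i ∈ Finset.range (n-m), ((m:ℝ)+1+i) :=
      Finset.prod_congr rfl fun i _ => by ring
    rw [hp]
    have := h2pow m hkm
    linear_combination ((1 / Real.Gamma ρ) * (1/(n.factorial:ℝ)) * (n.choose m) *
      (∏ i ∈ Finset.range (n-m), ((m:ℝ)+1+i)) * (∏ i ∈ Finset.range m, ((n:ℝ)+1+i)) *
      (m.choose k) * ((k.factorial : ℝ) * Real.Gamma ρ / Real.Gamma ((k:ℝ)+1+ρ) * S)) * this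
  have hRg : ∑ m ∈ Finset.Ico k (n+1), ((n.factorial:ℝ) / Real.Gamma ((n:ℝ)+ρ+1)) *
        ((1/(n.factorial:ℝ)) * (n.choose m) * (∏ i ∈ Finset.range (n-m), (-ρ+(m:ℝ)+1+i)) *
          (∏ i ∈ Finset.range m, ((n:ℝ)+1+i)) * ((2:ℝ)⁻¹)^m * ((-2:ℝ))^(m-k) * (m.choose k)) * S
      = (((n.factorial:ℝ) / Real.Gamma ((n:ℝ)+ρ+1)) * (1/(n.factorial:ℝ)) * ((2:ℝ)⁻¹)^k * S) *
        ∑ m ∈ Finset.Ico k (n+1), (-1:ℝ)^(m-k) * (n.choose m) * (m.choose k) *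
          (∏ i ∈ Finset.range m, ((n:ℝ)+1+i)) * (∏ i ∈ Finset.range (n-m), ((m:ℝ)+1-ρ+i)) := by
    rw [Finset.mul_sum]
    refine Finset.sum_congr rfl fun m hm => ?_
    have hkm : k ≤ m := (Finset.mem_Ico.mp hm).1
    have hp : ∏ i ∈ Finset.range (n-m), (-ρ+(m:ℝ)+1+i) = ∏ i ∈ Finset.range (n-m), ((m:ℝ)+1-ρ+i) :=
      Finset.prod_congr rfl fun i _ => by ring
    rw [hp]
    have := h2pow m hkm
    linear_combination (((n.factorial:ℝ) / Real.Gamma ((n:ℝ)+ρ+1)) * (1/(n.factorial:ℝ)) *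
      (n.choose m) * (∏ i ∈ Finset.range (n-m), ((m:ℝ)+1-ρ+i)) *
      (∏ i ∈ Finset.range m, ((n:ℝ)+1+i)) * (m.choose k) * S) * this
  rw [hL, hRg, hCL 0, hCL ρ]
  -- now a scalar identity
  have hA : Real.Gamma ((n:ℝ)+ρ+1) = Real.Gamma ((k:ℝ)+1+ρ) * ∏ i ∈ Finset.range (n-k), ((k:ℝ)+1+ρ+i) := by
    have := aux_Gamma_shift (z := (k:ℝ)+1+ρ) (by positivity) (n-k)
    rw [Nat.cast_sub hk] at this
    rw [show (n:ℝ)+ρ+1 = (k:ℝ)+1+ρ+((n:ℝ)-(k:ℝ)) by ring, this]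
  have hB : (n.factorial:ℝ) = (k.factorial:ℝ) * ∏ i ∈ Finset.range (n-k), ((k:ℝ)+1+(0:ℝ)+i) := by
    have := aux_Gamma_shift (z := (k:ℝ)+1) (by positivity) (n-k)
    rw [Nat.cast_sub hk] at this
    rw [show (k:ℝ)+1+((n:ℝ)-(k:ℝ)) = (n:ℝ)+1 by ring] at this
    rw [← Real.Gamma_nat_eq_factorial, ← Real.Gamma_nat_eq_factorial]
    push_cast
    rw [this]
    exact congrArg _ (Finset.prod_congr rfl fun i _ => by ring)
  have hΓρ : Real.Gamma ρ ≠ 0 := (Real.Gamma_pos_of_pos hρ).ne'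
  have hΓk : Real.Gamma ((k:ℝ)+1+ρ) ≠ 0 := (Real.Gamma_pos_of_pos (by positivity)).ne'
  have hΓn : Real.Gamma ((n:ℝ)+ρ+1) ≠ 0 := (Real.Gamma_pos_of_pos (by positivity)).ne'
  have hfac : (n.factorial:ℝ) ≠ 0 := by exact_mod_cast n.factorial_ne_zero
  rw [hA, hB]
  field_simp

theorem stmt8 (ρ : ℝ) (hρ : 0 < ρ) (n : ℕ) (x : ℝ) (hx : x ∈ Set.Ioo (-1 : ℝ) 1) :
    fracInt (-1) ρ (legendreP n) x
      = (n.factorial : ℝ) / Real.Gamma (n + ρ + 1) * (1 + x) ^ ρ * jacobiP n (-ρ) ρ x := by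
  obtain ⟨hx1, hx2⟩ := hx
  have hS : (0:ℝ) < 1 + x := by linarith
  -- binomial expansion of ((y-1)/2)^m
  have hb : ∀ (y : ℝ) (m : ℕ), ((y - 1)/2)^m
      = ∑ k ∈ Finset.range (m+1), ((2:ℝ)⁻¹)^m * ((-2:ℝ))^(m-k) * (m.choose k) * (1+y)^k := by
    intro y m
    rw [div_eq_mul_inv, mul_pow, show y - 1 = (1+y) + (-2) by ring, add_pow, Finset.sum_mul]
    exact Finset.sum_congr rfl fun k _ => by ring
  -- pointwise expansion of the integrand
  have hleg : ∀ y : ℝ, legendreP n y * (x - y)^(ρ-1)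
      = ∑ m ∈ Finset.range (n+1), ∑ k ∈ Finset.range (m+1),
          ((1/(n.factorial:ℝ)) * (n.choose m) * (∏ i ∈ Finset.range (n-m), ((m:ℝ)+1+i)) *
            (∏ i ∈ Finset.range m, ((n:ℝ)+1+i)) * ((2:ℝ)⁻¹)^m * ((-2:ℝ))^(m-k) * (m.choose k)) *
          ((1+y)^k * (x-y)^(ρ-1)) := by
    intro y
    unfold legendreP jacobiP
    simp only [zero_add]
    rw [Finset.mul_sum, Finset.sum_mul]
    refine Finset.sum_congr rfl fun m _ => ?_
    rw [hb y m]
    simp only [Finset.mul_sum, Finset.sum_mul]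
    exact Finset.sum_congr rfl fun k _ => by ring
  -- compute the fractional integral
  have hInt : fracInt (-1) ρ (legendreP n) x
      = ∑ m ∈ Finset.range (n+1), ∑ k ∈ Finset.range (m+1), (1 / Real.Gamma ρ) *
          (((1/(n.factorial:ℝ)) * (n.choose m) * (∏ i ∈ Finset.range (n-m), ((m:ℝ)+1+i)) *
            (∏ i ∈ Finset.range m, ((n:ℝ)+1+i)) * ((2:ℝ)⁻¹)^m * ((-2:ℝ))^(m-k) * (m.choose k)) *
          ((k.factorial : ℝ) * Real.Gamma ρ / Real.Gamma ((k:ℝ)+1+ρ) * (1+x)^((k:ℝ)+ρ))) := by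
    unfold fracInt
    rw [intervalIntegral.integral_congr (g := fun y => ∑ m ∈ Finset.range (n+1),
        ∑ k ∈ Finset.range (m+1),
          ((1/(n.factorial:ℝ)) * (n.choose m) * (∏ i ∈ Finset.range (n-m), ((m:ℝ)+1+i)) *
            (∏ i ∈ Finset.range m, ((n:ℝ)+1+i)) * ((2:ℝ)⁻¹)^m * ((-2:ℝ))^(m-k) * (m.choose k)) *
          ((1+y)^k * (x-y)^(ρ-1))) (fun y _ => hleg y)]
    rw [intervalIntegral.integral_finset_sum (fun m _ => by
      have := IntervalIntegrable.sum (μ := MeasureTheory.volume) (a := (-1:ℝ)) (b := x)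
        (Finset.range (m+1))
        (f := fun k => fun y =>
          ((1/(n.factorial:ℝ)) * (n.choose m) * (∏ i ∈ Finset.range (n-m), ((m:ℝ)+1+i)) *
            (∏ i ∈ Finset.range m, ((n:ℝ)+1+i)) * ((2:ℝ)⁻¹)^m * ((-2:ℝ))^(m-k) * (m.choose k)) *
          ((1+y)^k * (x-y)^(ρ-1)))
        (fun k _ => (aux_intg k hρ).const_mul _)
      rwa [Finset.sum_fn] at this)]
    rw [Finset.mul_sum]
    refine Finset.sum_congr rfl fun m _ => ?_
    rw [intervalIntegral.integral_finset_sum (fun k _ => (aux_intg k hρ).const_mul _)]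
    rw [Finset.mul_sum]
    refine Finset.sum_congr rfl fun k _ => ?_
    rw [intervalIntegral.integral_const_mul, aux_J k hρ hx1]
  -- expand the right-hand side
  have hRHS : (n.factorial : ℝ) / Real.Gamma (n + ρ + 1) * (1 + x) ^ ρ * jacobiP n (-ρ) ρ x
      = ∑ m ∈ Finset.range (n+1), ∑ k ∈ Finset.range (m+1),
          ((n.factorial:ℝ) / Real.Gamma ((n:ℝ)+ρ+1)) *
          ((1/(n.factorial:ℝ)) * (n.choose m) * (∏ i ∈ Finset.range (n-m), (-ρ+(m:ℝ)+1+i)) *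
            (∏ i ∈ Finset.range m, ((n:ℝ)+1+i)) * ((2:ℝ)⁻¹)^m * ((-2:ℝ))^(m-k) * (m.choose k)) *
          (1+x)^((k:ℝ)+ρ) := by
    unfold jacobiP
    rw [Finset.mul_sum, Finset.mul_sum]
    refine Finset.sum_congr rfl fun m _ => ?_
    have hpr : ∏ i ∈ Finset.range m, (-ρ + ρ + (n:ℝ) + 1 + i) = ∏ i ∈ Finset.range m, ((n:ℝ)+1+i) :=
      Finset.prod_congr rfl fun i _ => by ring
    rw [hpr, hb x m]
    simp only [Finset.mul_sum]
    refine Finset.sum_congr rfl fun k _ => ?_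
    have hpow : (1+x)^((k:ℝ)+ρ) = (1+x)^k * (1+x)^ρ := by
      rw [Real.rpow_add hS, Real.rpow_natCast]
    rw [hpow]
    ring
  rw [hInt, hRHS]
  -- swap the order of summation on both sides
  have hswap : ∀ F : ℕ → ℕ → ℝ,
      (∑ m ∈ Finset.range (n+1), ∑ k ∈ Finset.range (m+1), F m k)
        = ∑ k ∈ Finset.range (n+1), ∑ m ∈ Finset.Ico k (n+1), F m k := by
    intro F
    have := Finset.sum_Ico_Ico_comm 0 (n+1) (fun k m => F m k)
    simp only [Finset.range_eq_Ico]
    exact this.symm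
  rw [hswap, hswap]
  refine Finset.sum_congr rfl fun k hk => ?_
  have hkn : k ≤ n := by simpa [Nat.lt_succ_iff] using Finset.mem_range.mp hk
  exact aux_keyE hρ n k hkn (fun t => aux_CL n k hkn t) ((1+x)^((k:ℝ)+ρ))
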